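/- Let 𝓛 be a thicket on S and M ∈ 𝓜̄_𝓛. For U, T ∈ 𝓛 with U ⊆ T, π_U^T maps M_T into M_U and hence induces maps π_U^T : M_T → M_U and π̄_U^T : V_T/M_T → V_U/M_U. Let σ_{𝓛,M} be the ℂ-vector space of families (α_T)_{T ∈ 𝓛} with α_T ∈ Hom_ℂ(M_T, V_T/M_T) such that π̄_U^T ∘ α_T = α_U ∘ π_U^T for all U, T ∈ 𝓛 with U ⊆ T. Then dim_ℂ σ_{𝓛,M} = |S| − 2. -/

import Mathlib

variable {α : Type*} [DecidableEq α]
set_option linter.unusedSectionVars false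
set_option linter.unnecessarySimpa false
set_option linter.unusedVariables false
set_option maxHeartbeats 1000000
set_option synthInstance.maxHeartbeats 100000


/-- A thicket on `S`. -/
def IsThicket (S : Finset α) (L : Finset (Finset α)) : Prop :=
  S ∈ L ∧ (∀ T ∈ L, T ⊆ S) ∧ (∀ T ∈ L, 2 ≤ T.card) ∧
    ∀ U ∈ L, ∀ V ∈ L, (U ∩ V).Nonempty → U ∪ V ∈ L

noncomputable section

/-- The subspace of constant functions in `F(T, ℂ) = (T → ℂ)`. -/
def constSub (T : Finset α) : Submodule ℂ (↥T → ℂ) :=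
  Submodule.span ℂ {fun _ => 1}

/-- `V_T = F(T, ℂ)/C_T`. -/
abbrev Vspace (T : Finset α) : Type _ := (↥T → ℂ) ⧸ constSub T

/-- Restriction of functions, as a linear map `F(T,ℂ) → F(U,ℂ)` for `U ⊆ T`. -/
def restr (U T : Finset α) (h : U ⊆ T) : (↥T → ℂ) →ₗ[ℂ] (↥U → ℂ) :=
  LinearMap.funLeft ℂ ℂ (fun u => ⟨u.1, h u.2⟩)

/-- The induced map `π_U^T : V_T → V_U`. -/
def piUT (U T : Finset α) (h : U ⊆ T) : Vspace T →ₗ[ℂ] Vspace U :=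
  Submodule.mapQ (constSub T) (constSub U) (restr U T h) (by
    rw [constSub, Submodule.span_le, Set.singleton_subset_iff, SetLike.mem_coe,
      Submodule.mem_comap]
    exact Submodule.subset_span rfl)

/-- The space `σ_{L,M}` of families `(α_T)_{T ∈ L}` with
`α_T ∈ Hom(M_T, V_T/M_T)` satisfying `π̄_U^T ∘ α_T = α_U ∘ π_U^T` for all
`U ⊆ T` in `L`. -/
def sigmaSub (L : Finset (Finset α)) (M : (T : ↥L) → Submodule ℂ (Vspace T.1))
    (hM : ∀ (U T : ↥L) (h : U.1 ⊆ T.1),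
      M T ≤ Submodule.comap (piUT U.1 T.1 h) (M U)) :
    Submodule ℂ ((T : ↥L) → (↥(M T) →ₗ[ℂ] (Vspace T.1 ⧸ M T))) where
  carrier := {a | ∀ (U T : ↥L) (h : U.1 ⊆ T.1),
    (Submodule.mapQ (M T) (M U) (piUT U.1 T.1 h) (hM U T h)).comp (a T)
      = (a U).comp ((piUT U.1 T.1 h).restrict
          (fun x hx => Submodule.mem_comap.mp (hM U T h hx)))}
  add_mem' := by
    intro a b ha hb U T h
    simp only [Pi.add_apply, LinearMap.comp_add, LinearMap.add_comp,
      ha U T h, hb U T h]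
  zero_mem' := by
    intro U T h
    simp
  smul_mem' := by
    intro c a ha U T h
    simp only [Pi.smul_apply, LinearMap.comp_smul, LinearMap.smul_comp, ha U T h]

section PortInst

@[reducible] def Vspace.instAddCommGroup (T : Finset α) : AddCommGroup (Vspace T) :=
  Submodule.Quotient.addCommGroup _

@[reducible] def Vspace.instModule (T : Finset α) : Module ℂ (Vspace T) :=
  Submodule.Quotient.module _

attribute [local instance] Vspace.instAddCommGroup Vspace.instModule

@[reducible] def sigmaSub.instAddCommGroup (L : Finset (Finset α))
    (M : (T : ↥L) → Submodule ℂ (Vspace T.1))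
    (hM : ∀ (U T : ↥L) (h : U.1 ⊆ T.1), M T ≤ Submodule.comap (piUT U.1 T.1 h) (M U)) :
    AddCommGroup ↥(sigmaSub L M hM) :=
  Submodule.addCommGroup (M := ((T : ↥L) → ↥(M T) →ₗ[ℂ] Vspace T.1 ⧸ M T)) (sigmaSub L M hM)

attribute [local instance] sigmaSub.instAddCommGroup

theorem sigmaSub.instFiniteDimensional (L : Finset (Finset α))
    (M : (T : ↥L) → Submodule ℂ (Vspace T.1))
    (hM : ∀ (U T : ↥L) (h : U.1 ⊆ T.1), M T ≤ Submodule.comap (piUT U.1 T.1 h) (M U)) :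
    FiniteDimensional ℂ ↥(sigmaSub L M hM) :=
  FiniteDimensional.finiteDimensional_submodule
    (V := ((T : ↥L) → ↥(M T) →ₗ[ℂ] Vspace T.1 ⧸ M T)) (sigmaSub L M hM)

attribute [local instance] sigmaSub.instFiniteDimensional

-- ### basic lemmas

lemma piUT_mk (U T : Finset α) (h : U ⊆ T) (g : ↥T → ℂ) :
    piUT U T h (Submodule.Quotient.mk g) = Submodule.Quotient.mk (restr U T h g) := rfl

lemma restr_comp_apply (U T W : Finset α) (h : U ⊆ T) (h' : T ⊆ W) (g : ↥W → ℂ) :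
    restr U T h (restr T W h' g) = restr U W (h.trans h') g := rfl

lemma piUT_comp_apply (U T W : Finset α) (h : U ⊆ T) (h' : T ⊆ W) (x : Vspace W) :
    piUT U T h (piUT T W h' x) = piUT U W (h.trans h') x := by
  obtain ⟨g, rfl⟩ := Submodule.Quotient.mk_surjective _ x
  rfl

lemma piUT_comp (U T W : Finset α) (h : U ⊆ T) (h' : T ⊆ W) :
    (piUT U T h).comp (piUT T W h') = piUT U W (h.trans h') :=
  LinearMap.ext fun x => piUT_comp_apply U T W h h' x

lemma piUT_self (T : Finset α) (h : T ⊆ T) : piUT T T h = LinearMap.id := by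
  refine LinearMap.ext fun x => ?_
  obtain ⟨g, rfl⟩ := Submodule.Quotient.mk_surjective _ x
  rfl

/-- Key gluing lemma: a class on `W` vanishing on `T` and `T'` with
`W ⊆ T ∪ T'` and `T ∩ T'` nonempty vanishes. -/
lemma piUT_glue {T T' W : Finset α} (hT : T ⊆ W) (hT' : T' ⊆ W)
    (hU : W ⊆ T ∪ T') (hI : (T ∩ T').Nonempty) (x : Vspace W)
    (h1 : piUT T W hT x = 0) (h2 : piUT T' W hT' x = 0) : x = 0 := by
  obtain ⟨g, rfl⟩ := Submodule.Quotient.mk_surjective _ x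
  rw [piUT_mk, Submodule.Quotient.mk_eq_zero, constSub, Submodule.mem_span_singleton] at h1 h2
  obtain ⟨c1, hc1⟩ := h1
  obtain ⟨c2, hc2⟩ := h2
  obtain ⟨s, hs⟩ := hI
  rw [Finset.mem_inter] at hs
  have hcc : c1 = c2 := by
    have e1 : g ⟨s, hT hs.1⟩ = c1 := by
      have := congrFun hc1 ⟨s, hs.1⟩
      simpa [restr, LinearMap.funLeft] using this.symm
    have e2 : g ⟨s, hT' hs.2⟩ = c2 := by
      have := congrFun hc2 ⟨s, hs.2⟩
      simpa [restr, LinearMap.funLeft] using this.symm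
    rw [← e1, ← e2]
  rw [Submodule.Quotient.mk_eq_zero, constSub, Submodule.mem_span_singleton]
  refine ⟨c1, funext fun w => ?_⟩
  have hw := hU w.2
  rw [Finset.mem_union] at hw
  rcases hw with hw | hw
  · have := congrFun hc1 ⟨w.1, hw⟩
    simpa [restr, LinearMap.funLeft] using this
  · have := congrFun hc2 ⟨w.1, hw⟩
    rw [hcc]
    simpa [restr, LinearMap.funLeft] using this

lemma finrank_Vspace (T : Finset α) (h : T.Nonempty) :
    Module.finrank ℂ (Vspace T) = T.card - 1 := by
  have h1 : Module.finrank ℂ (↥T → ℂ) = T.card := by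
    rw [Module.finrank_fintype_fun_eq_card, Fintype.card_coe]
  have h2 : Module.finrank ℂ ↥(constSub T) = 1 := by
    rw [constSub]
    apply finrank_span_singleton
    intro hco
    obtain ⟨t, ht⟩ := h
    have := congrFun hco ⟨t, ht⟩
    simpa using this
  have h3 : Module.finrank ℂ (Vspace T) + Module.finrank ℂ ↥(constSub T)
      = Module.finrank ℂ (↥T → ℂ) := Submodule.finrank_quotient_add_finrank (constSub T)
  rw [h1, h2] at h3
  omega

/-- A nonzero linear map between 1-dimensional spaces is bijective. -/
lemma bij_of_ne_zero {A B : Type*} [AddCommGroup A] [Module ℂ A] [AddCommGroup B] [Module ℂ B]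
    [FiniteDimensional ℂ A] [FiniteDimensional ℂ B]
    (hA : Module.finrank ℂ A = 1) (hB : Module.finrank ℂ B = 1)
    (f : A →ₗ[ℂ] B) (hf : f ≠ 0) : Function.Bijective f := by
  have hker : LinearMap.ker f = ⊥ := by
    have hne : LinearMap.ker f ≠ ⊤ := fun hk => hf (LinearMap.ker_eq_top.mp hk)
    have hle : Module.finrank ℂ ↥(LinearMap.ker f) ≤ 1 := hA ▸ Submodule.finrank_le _
    interval_cases hk : Module.finrank ℂ ↥(LinearMap.ker f)
    · exact Submodule.finrank_eq_zero.mp hk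
    · exact absurd (Submodule.eq_top_of_finrank_eq (by rw [hk, hA])) hne
  constructor
  · exact LinearMap.ker_eq_bot.mp hker
  · rw [← LinearMap.range_eq_top]
    have h5 := LinearMap.finrank_range_add_finrank_ker f
    rw [hker, hA] at h5
    have hr : Module.finrank ℂ ↥(LinearMap.range f) = 1 := by simpa using h5
    exact Submodule.eq_top_of_finrank_eq (hr.trans hB.symm)

-- ### part 2

lemma comp_eq_zero_surj {A B C : Type*} [AddCommGroup A] [Module ℂ A] [AddCommGroup B]
    [Module ℂ B] [AddCommGroup C] [Module ℂ C] {f : A →ₗ[ℂ] B} {g : B →ₗ[ℂ] C}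
    (h : g.comp f = 0) (hf : Function.Surjective f) : g = 0 := by
  refine LinearMap.ext fun b => ?_
  obtain ⟨a, rfl⟩ := hf b
  exact LinearMap.congr_fun h a

variable {L : Finset (Finset α)}

def rmp (M : (T : ↥L) → Submodule ℂ (Vspace T.1))
    (hM : ∀ (U T : ↥L) (h : U.1 ⊆ T.1), M T ≤ Submodule.comap (piUT U.1 T.1 h) (M U))
    (U T : ↥L) (h : U.1 ⊆ T.1) : ↥(M T) →ₗ[ℂ] ↥(M U) :=
  (piUT U.1 T.1 h).restrict (fun x hx => hM U T h hx)

def qmp (M : (T : ↥L) → Submodule ℂ (Vspace T.1))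
    (hM : ∀ (U T : ↥L) (h : U.1 ⊆ T.1), M T ≤ Submodule.comap (piUT U.1 T.1 h) (M U))
    (U T : ↥L) (h : U.1 ⊆ T.1) : (Vspace T.1 ⧸ M T) →ₗ[ℂ] (Vspace U.1 ⧸ M U) :=
  Submodule.mapQ (M T) (M U) (piUT U.1 T.1 h) (hM U T h)

variable {M : (T : ↥L) → Submodule ℂ (Vspace T.1)}
  {hM : ∀ (U T : ↥L) (h : U.1 ⊆ T.1), M T ≤ Submodule.comap (piUT U.1 T.1 h) (M U)}

lemma mem_sigmaSub {a : (T : ↥L) → (↥(M T) →ₗ[ℂ] (Vspace T.1 ⧸ M T))} :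
    a ∈ sigmaSub L M hM ↔ ∀ (U T : ↥L) (h : U.1 ⊆ T.1),
      (qmp M hM U T h).comp (a T) = (a U).comp (rmp M hM U T h) := Iff.rfl

lemma rmp_comp_apply (U T W : ↥L) (h : U.1 ⊆ T.1) (h' : T.1 ⊆ W.1) (x : ↥(M W)) :
    rmp M hM U T h (rmp M hM T W h' x) = rmp M hM U W (h.trans h') x := by
  apply Subtype.ext
  exact piUT_comp_apply U.1 T.1 W.1 h h' x.1

lemma rmp_self_apply (T : ↥L) (h : T.1 ⊆ T.1) (x : ↥(M T)) : rmp M hM T T h x = x := by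
  apply Subtype.ext
  show piUT T.1 T.1 h x.1 = x.1
  rw [piUT_self]; rfl

lemma qmp_comp_apply (U T W : ↥L) (h : U.1 ⊆ T.1) (h' : T.1 ⊆ W.1)
    (x : Vspace W.1 ⧸ M W) :
    qmp M hM U T h (qmp M hM T W h' x) = qmp M hM U W (h.trans h') x := by
  obtain ⟨v, rfl⟩ := Submodule.Quotient.mk_surjective _ x
  show qmp M hM U T h (qmp M hM T W h' (Submodule.Quotient.mk v)) = _
  rw [qmp, qmp, qmp, Submodule.mapQ_apply, Submodule.mapQ_apply, Submodule.mapQ_apply,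
    piUT_comp_apply]

lemma qmp_self_apply (T : ↥L) (h : T.1 ⊆ T.1) (x : Vspace T.1 ⧸ M T) :
    qmp M hM T T h x = x := by
  obtain ⟨v, rfl⟩ := Submodule.Quotient.mk_surjective _ x
  show qmp M hM T T h (Submodule.Quotient.mk v) = _
  rw [qmp, Submodule.mapQ_apply, piUT_self]
  rfl


structure Setup (α : Type*) [DecidableEq α] where
  S : Finset α
  L : Finset (Finset α)
  hL : IsThicket S L
  M : (T : ↥L) → Submodule ℂ (Vspace T.1)
  hdim : ∀ T, Module.finrank ℂ ↥(M T) = 1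
  hM : ∀ (U T : ↥L) (h : U.1 ⊆ T.1), M T ≤ Submodule.comap (piUT U.1 T.1 h) (M U)

namespace Setup

variable (D : Setup α)

abbrev Sv : ↥D.L := ⟨D.S, D.hL.1⟩

lemma hsub (T : ↥D.L) : T.1 ⊆ D.S := D.hL.2.1 T.1 T.2

/-- restriction `M_S → M_T`. -/
def rS (T : ↥D.L) : ↥(D.M D.Sv) →ₗ[ℂ] ↥(D.M T) := rmp D.M D.hM T D.Sv (D.hsub T)

/-- quotient map `V_S/M_S → V_T/M_T`. -/
def qS (T : ↥D.L) : (Vspace D.S ⧸ D.M D.Sv) →ₗ[ℂ] (Vspace T.1 ⧸ D.M T) :=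
  qmp D.M D.hM T D.Sv (D.hsub T)

def Inact (T : ↥D.L) : Prop := D.rS T = 0

lemma card_two (T : ↥D.L) : 2 ≤ T.1.card := D.hL.2.2.1 T.1 T.2

lemma nonempty_T (T : ↥D.L) : T.1.Nonempty :=
  Finset.card_pos.mp (by have := D.card_two T; omega)

lemma inact_down {U T : ↥D.L} (hUT : U.1 ⊆ T.1) (hT : D.Inact T) : D.Inact U := by
  rw [Inact] at hT ⊢
  refine LinearMap.ext fun m => ?_
  have : D.rS U m = rmp D.M D.hM U T hUT (D.rS T m) := (rmp_comp_apply U T D.Sv hUT (D.hsub T) m).symm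
  rw [this, hT]
  simp

lemma not_inact_S : ¬ D.Inact D.Sv := by
  intro h
  rw [Inact] at h
  have h1 : Nontrivial ↥(D.M D.Sv) := by
    have := D.hdim D.Sv
    exact Module.nontrivial_of_finrank_pos (R := ℂ) (by omega)
  obtain ⟨x, y, hxy⟩ := h1
  apply hxy
  have hx : D.rS D.Sv x = x := rmp_self_apply _ _ _
  have hy : D.rS D.Sv y = y := rmp_self_apply _ _ _
  rw [← hx, ← hy, h]
  rfl

lemma rS_bijective (T : ↥D.L) (h : ¬ D.Inact T) : Function.Bijective (D.rS T) :=
  bij_of_ne_zero (D.hdim D.Sv) (D.hdim T) _ h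

/-- `M_S ≃ M_T` for active `T`. -/
def eqv (T : ↥D.L) (h : ¬ D.Inact T) : ↥(D.M D.Sv) ≃ₗ[ℂ] ↥(D.M T) :=
  LinearEquiv.ofBijective _ (D.rS_bijective T h)

lemma eqv_apply (T : ↥D.L) (h : ¬ D.Inact T) (x) : D.eqv T h x = D.rS T x := rfl

lemma rmp_eq_zero {U T : ↥D.L} (hUT : U.1 ⊆ T.1) (hU : D.Inact U) (hT : ¬ D.Inact T) :
    rmp D.M D.hM U T hUT = 0 := by
  have hc : (rmp D.M D.hM U T hUT).comp (D.rS T) = 0 := by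
    refine LinearMap.ext fun m => ?_
    show rmp D.M D.hM U T hUT (D.rS T m) = 0
    rw [rS, rmp_comp_apply]
    exact LinearMap.congr_fun hU m
  exact comp_eq_zero_surj hc (D.rS_bijective T hT).2

lemma sigma_act_zero {x : (T : ↥D.L) → (↥(D.M T) →ₗ[ℂ] (Vspace T.1 ⧸ D.M T))}
    (hx : x ∈ sigmaSub D.L D.M D.hM) (hS : x D.Sv = 0) (T : ↥D.L) (hT : ¬ D.Inact T) :
    x T = 0 := by
  have h := (mem_sigmaSub.mp hx) T D.Sv (D.hsub T)
  rw [hS] at h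
  simp only [LinearMap.comp_zero] at h
  exact comp_eq_zero_surj h.symm (D.rS_bijective T hT).2

def MaxP (T : ↥D.L) : Prop := D.Inact T ∧ ∀ T' : ↥D.L, D.Inact T' → T.1 ⊆ T'.1 → T = T'

lemma max_eq {Ti Tj : ↥D.L} (hi : D.MaxP Ti) (hj : D.MaxP Tj)
    (hne : (Ti.1 ∩ Tj.1).Nonempty) : Ti = Tj := by
  have hW : Ti.1 ∪ Tj.1 ∈ D.L := D.hL.2.2.2 Ti.1 Ti.2 Tj.1 Tj.2 hne
  set W : ↥D.L := ⟨Ti.1 ∪ Tj.1, hW⟩ with hWdef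
  have hWin : D.Inact W := by
    refine LinearMap.ext fun m => ?_
    apply Subtype.ext
    show piUT W.1 D.S (D.hsub W) m.1 = 0
    refine piUT_glue (T := Ti.1) (T' := Tj.1) Finset.subset_union_left
      Finset.subset_union_right (Finset.Subset.refl _) hne _ ?_ ?_
    · rw [piUT_comp_apply]
      have := LinearMap.congr_fun hi.1 m
      exact congrArg Subtype.val this
    · rw [piUT_comp_apply]
      have := LinearMap.congr_fun hj.1 m
      exact congrArg Subtype.val this
  have e1 : Ti = W := hi.2 W hWin Finset.subset_union_left
  have e2 : Tj = W := hj.2 W hWin Finset.subset_union_right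
  rw [e1, e2]

lemma exists_max : ∀ (k : ℕ) (T : ↥D.L), D.S.card - T.1.card ≤ k → D.Inact T →
    ∃ Tm : ↥D.L, D.MaxP Tm ∧ T.1 ⊆ Tm.1 := by
  intro k
  induction k with
  | zero =>
    intro T hk hT
    refine ⟨T, ⟨hT, fun T' hT' hsub' => ?_⟩, Finset.Subset.refl _⟩
    have hc : T'.1.card ≤ T.1.card := by
      have h1 := Finset.card_le_card (D.hsub T')
      omega
    exact (Subtype.ext (Finset.eq_of_subset_of_card_le hsub' hc)).symm ▸ rfl
  | succ k ih =>
    intro T hk hT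
    by_cases hmax : ∀ T' : ↥D.L, D.Inact T' → T.1 ⊆ T'.1 → T = T'
    · exact ⟨T, ⟨hT, hmax⟩, Finset.Subset.refl _⟩
    · push_neg at hmax
      obtain ⟨T', hT', hsub', hne⟩ := hmax
      have hcard : T.1.card < T'.1.card :=
        Finset.card_lt_card (Finset.ssubset_iff_subset_ne.mpr ⟨hsub', fun h => hne (Subtype.ext h)⟩)
      have hk' : D.S.card - T'.1.card ≤ k := by omega
      obtain ⟨Tm, hTm, hsub''⟩ := ih T' hk' hT'
      exact ⟨Tm, hTm, hsub'.trans hsub''⟩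

lemma exists_max' (T : ↥D.L) (hT : D.Inact T) :
    ∃ Tm : ↥D.L, D.MaxP Tm ∧ T.1 ⊆ Tm.1 :=
  D.exists_max (D.S.card - T.1.card) T le_rfl hT

def theI (T : ↥D.L) (hT : D.Inact T) : ↥D.L := (D.exists_max' T hT).choose

lemma theI_max (T : ↥D.L) (hT : D.Inact T) : D.MaxP (D.theI T hT) :=
  (D.exists_max' T hT).choose_spec.1

lemma theI_sub (T : ↥D.L) (hT : D.Inact T) : T.1 ⊆ (D.theI T hT).1 :=
  (D.exists_max' T hT).choose_spec.2

lemma theI_unique (T : ↥D.L) (hT : D.Inact T) (Tm : ↥D.L) (hTm : D.MaxP Tm)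
    (hsub' : T.1 ⊆ Tm.1) : D.theI T hT = Tm := by
  apply D.max_eq (D.theI_max T hT) hTm
  obtain ⟨t, ht⟩ := D.nonempty_T T
  exact ⟨t, Finset.mem_inter.mpr ⟨D.theI_sub T hT ht, hsub' ht⟩⟩


open scoped Classical

/-- The sub-setup on an element `i` of `L`. -/
abbrev sub (i : ↥D.L) : Setup α where
  S := i.1
  L := D.L.filter (fun X => X ⊆ i.1)
  hL := by
    refine ⟨Finset.mem_filter.mpr ⟨i.2, Finset.Subset.refl _⟩,
      fun T hT => (Finset.mem_filter.mp hT).2,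
      fun T hT => D.hL.2.2.1 T (Finset.mem_filter.mp hT).1,
      fun U hU V hV hUV => ?_⟩
    rw [Finset.mem_filter] at hU hV ⊢
    exact ⟨D.hL.2.2.2 U hU.1 V hV.1 hUV, Finset.union_subset hU.2 hV.2⟩
  M := fun T => D.M ⟨T.1, (Finset.mem_filter.mp T.2).1⟩
  hdim := fun T => D.hdim ⟨T.1, (Finset.mem_filter.mp T.2).1⟩
  hM := fun U T h => D.hM ⟨U.1, (Finset.mem_filter.mp U.2).1⟩ ⟨T.1, (Finset.mem_filter.mp T.2).1⟩ h

def up (i : ↥D.L) (T : ↥(D.sub i).L) : ↥D.L := ⟨T.1, (Finset.mem_filter.mp T.2).1⟩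

lemma up_sub (i : ↥D.L) (T : ↥(D.sub i).L) : (D.up i T).1 ⊆ i.1 :=
  (Finset.mem_filter.mp T.2).2

lemma up_inact (i : ↥D.L) (hi : D.Inact i) (T : ↥(D.sub i).L) : D.Inact (D.up i T) :=
  D.inact_down (D.up_sub i T) hi

lemma mem_sigma_sub (i : ↥D.L) (x : (T : ↥D.L) → (↥(D.M T) →ₗ[ℂ] (Vspace T.1 ⧸ D.M T)))
    (hx : x ∈ sigmaSub D.L D.M D.hM) :
    (fun T => x (D.up i T)) ∈ sigmaSub (D.sub i).L (D.sub i).M (D.sub i).hM := by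
  apply mem_sigmaSub.mpr
  intro U T h
  exact (mem_sigmaSub.mp hx) (D.up i U) (D.up i T) h

/-- post-composition with `qS T` on `Hom(M_S, V_S/M_S)`. -/
def cmap (T : ↥D.L) :
    (↥(D.M D.Sv) →ₗ[ℂ] (Vspace D.S ⧸ D.M D.Sv)) →ₗ[ℂ]
      (↥(D.M D.Sv) →ₗ[ℂ] (Vspace T.1 ⧸ D.M T)) :=
  LinearMap.llcomp ℂ _ _ _ (D.qS T)

lemma cmap_apply (T : ↥D.L) (β) : D.cmap T β = (D.qS T).comp β := rfl

def Kp : Submodule ℂ (↥(D.M D.Sv) →ₗ[ℂ] (Vspace D.S ⧸ D.M D.Sv)) :=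
  ⨅ (T : ↥D.L) (_ : D.Inact T), LinearMap.ker (D.cmap T)

lemma mem_Kp {β} : β ∈ D.Kp ↔ ∀ T : ↥D.L, D.Inact T → (D.qS T).comp β = 0 := by
  simp only [Kp, Submodule.mem_iInf, LinearMap.mem_ker, cmap_apply]
  exact Iff.rfl

/-- Extension of `β ∈ K'` to a family. -/
def extFam (β : ↥(D.M D.Sv) →ₗ[ℂ] (Vspace D.S ⧸ D.M D.Sv)) :
    (T : ↥D.L) → (↥(D.M T) →ₗ[ℂ] (Vspace T.1 ⧸ D.M T)) :=
  fun T => if h : D.Inact T then 0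
    else (D.qS T).comp (β.comp (D.eqv T h).symm.toLinearMap)

lemma extFam_S (β) : D.extFam β D.Sv = β := by
  rw [extFam, dif_neg D.not_inact_S]
  refine LinearMap.ext fun m => ?_
  show D.qS D.Sv (β ((D.eqv D.Sv D.not_inact_S).symm m)) = β m
  have he : (D.eqv D.Sv D.not_inact_S).symm m = m := by
    have h1 := (D.eqv D.Sv D.not_inact_S).apply_symm_apply m
    rw [eqv_apply, rS, rmp_self_apply] at h1
    exact h1
  rw [he]
  exact qmp_self_apply _ _ _

lemma extFam_mem (β) (hβ : β ∈ D.Kp) : D.extFam β ∈ sigmaSub D.L D.M D.hM := by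
  rw [mem_sigmaSub]
  intro U T h
  by_cases hT : D.Inact T
  · have hU : D.Inact U := D.inact_down h hT
    simp only [extFam, dif_pos hT, dif_pos hU]
    simp
  · by_cases hU : D.Inact U
    · simp only [extFam, dif_neg hT, dif_pos hU]
      refine LinearMap.ext fun m => ?_
      show qmp D.M D.hM U T h (D.qS T (β ((D.eqv T hT).symm m))) = _
      rw [qS, qmp_comp_apply]
      have h0 := LinearMap.congr_fun ((D.mem_Kp).mp hβ U hU) ((D.eqv T hT).symm m)
      simp only [LinearMap.comp_apply] at h0
      rw [show qmp D.M D.hM U D.Sv _ = D.qS U from rfl]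
      simp [h0]
    · simp only [extFam, dif_neg hT, dif_neg hU]
      refine LinearMap.ext fun m => ?_
      show qmp D.M D.hM U T h (D.qS T (β ((D.eqv T hT).symm m)))
        = D.qS U (β ((D.eqv U hU).symm (rmp D.M D.hM U T h m)))
      have key : (D.eqv U hU).symm (rmp D.M D.hM U T h m) = (D.eqv T hT).symm m := by
        have h1 : rmp D.M D.hM U T h m = D.eqv U hU ((D.eqv T hT).symm m) := by
          rw [eqv_apply, rS]
          have h2 : m = D.eqv T hT ((D.eqv T hT).symm m) :=
            ((D.eqv T hT).apply_symm_apply m).symm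
          conv_lhs => rw [h2]
          rw [eqv_apply, rS, rmp_comp_apply]
        rw [h1, LinearEquiv.symm_apply_apply]
      rw [key, qS, qmp_comp_apply]
      rfl

/-- evaluation at `S` on `σ`. -/
def evf : ↥(sigmaSub D.L D.M D.hM) →ₗ[ℂ]
    (↥(D.M D.Sv) →ₗ[ℂ] (Vspace D.S ⧸ D.M D.Sv)) :=
  (LinearMap.proj D.Sv).comp (Submodule.subtype _)

lemma range_evf : LinearMap.range D.evf = D.Kp := by
  apply le_antisymm
  · rintro _ ⟨x, rfl⟩
    rw [mem_Kp]
    intro T hT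
    have h := (mem_sigmaSub.mp x.2) T D.Sv (D.hsub T)
    have hz : rmp D.M D.hM T D.Sv (D.hsub T) = 0 := hT
    rw [hz, LinearMap.comp_zero] at h
    exact h
  · intro β hβ
    exact ⟨⟨D.extFam β, D.extFam_mem β hβ⟩, D.extFam_S β⟩


-- ### kernel of evaluation

def kerToPi : ↥(LinearMap.ker D.evf) →ₗ[ℂ]
    ((i : {T : ↥D.L // D.MaxP T}) →
      ↥(sigmaSub (D.sub i.1).L (D.sub i.1).M (D.sub i.1).hM)) where
  toFun x := fun i => ⟨fun T => x.1.1 (D.up i.1 T), D.mem_sigma_sub i.1 x.1.1 x.1.2⟩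
  map_add' x y := by funext i; apply Subtype.ext; funext T; rfl
  map_smul' c x := by funext i; apply Subtype.ext; funext T; rfl

def dnFam (y : (i : {T : ↥D.L // D.MaxP T}) →
      ↥(sigmaSub (D.sub i.1).L (D.sub i.1).M (D.sub i.1).hM)) :
    (T : ↥D.L) → (↥(D.M T) →ₗ[ℂ] (Vspace T.1 ⧸ D.M T)) :=
  fun T => if h : D.Inact T then
    (y ⟨D.theI T h, D.theI_max T h⟩).1 ⟨T.1, Finset.mem_filter.mpr ⟨T.2, D.theI_sub T h⟩⟩
  else 0

lemma dn_congr (y : (i : {T : ↥D.L // D.MaxP T}) →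
      ↥(sigmaSub (D.sub i.1).L (D.sub i.1).M (D.sub i.1).hM))
    {i j : {T : ↥D.L // D.MaxP T}} (hij : i = j) (T : Finset α)
    (hTi : T ∈ (D.sub i.1).L) (hTj : T ∈ (D.sub j.1).L) :
    HEq ((y i).1 ⟨T, hTi⟩) ((y j).1 ⟨T, hTj⟩) := by
  subst hij; rfl

lemma dn_congr' (y : (i : {T : ↥D.L // D.MaxP T}) →
      ↥(sigmaSub (D.sub i.1).L (D.sub i.1).M (D.sub i.1).hM))
    {i j : {T : ↥D.L // D.MaxP T}} (hij : i = j) (T : ↥D.L)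
    (hTi : T.1 ∈ (D.sub i.1).L) (hTj : T.1 ∈ (D.sub j.1).L) :
    ((y i).1 ⟨T.1, hTi⟩ : ↥(D.M T) →ₗ[ℂ] (Vspace T.1 ⧸ D.M T)) = (y j).1 ⟨T.1, hTj⟩ := by
  subst hij; rfl

lemma dnFam_cond (y : (i : {T : ↥D.L // D.MaxP T}) →
      ↥(sigmaSub (D.sub i.1).L (D.sub i.1).M (D.sub i.1).hM))
    {U T : ↥D.L} (h : U.1 ⊆ T.1) (i : {T : ↥D.L // D.MaxP T})
    (hUi : U.1 ∈ (D.sub i.1).L) (hTi : T.1 ∈ (D.sub i.1).L) :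
    (qmp D.M D.hM U T h).comp ((y i).1 ⟨T.1, hTi⟩)
      = (((y i).1 ⟨U.1, hUi⟩ : ↥(D.M U) →ₗ[ℂ] (Vspace U.1 ⧸ D.M U))).comp
          (rmp D.M D.hM U T h) :=
  (mem_sigmaSub.mp (y i).2) ⟨U.1, hUi⟩ ⟨T.1, hTi⟩ h

lemma dnFam_mem (y : (i : {T : ↥D.L // D.MaxP T}) →
      ↥(sigmaSub (D.sub i.1).L (D.sub i.1).M (D.sub i.1).hM)) :
    D.dnFam y ∈ sigmaSub D.L D.M D.hM := by
  rw [mem_sigmaSub]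
  intro U T h
  by_cases hT : D.Inact T
  · have hU : D.Inact U := D.inact_down h hT
    simp only [dnFam, dif_pos hT, dif_pos hU]
    have hind : (⟨D.theI U hU, D.theI_max U hU⟩ : {T : ↥D.L // D.MaxP T})
        = ⟨D.theI T hT, D.theI_max T hT⟩ :=
      Subtype.ext (D.theI_unique U hU (D.theI T hT) (D.theI_max T hT)
        (h.trans (D.theI_sub T hT)))
    rw [D.dn_congr' y hind U (Finset.mem_filter.mpr ⟨U.2, D.theI_sub U hU⟩)
      (Finset.mem_filter.mpr ⟨U.2, h.trans (D.theI_sub T hT)⟩)]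
    exact D.dnFam_cond y h ⟨D.theI T hT, D.theI_max T hT⟩ _ _
  · simp only [dnFam, dif_neg hT]
    by_cases hU : D.Inact U
    · simp only [dif_pos hU]
      rw [D.rmp_eq_zero h hU hT]
      simp
    · simp only [dif_neg hU]
      simp

lemma dnFam_S (y : (i : {T : ↥D.L // D.MaxP T}) →
      ↥(sigmaSub (D.sub i.1).L (D.sub i.1).M (D.sub i.1).hM)) :
    D.dnFam y D.Sv = 0 := by
  simp only [dnFam, dif_neg D.not_inact_S]

def kerEquiv : ↥(LinearMap.ker D.evf) ≃ₗ[ℂ]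
    ((i : {T : ↥D.L // D.MaxP T}) →
      ↥(sigmaSub (D.sub i.1).L (D.sub i.1).M (D.sub i.1).hM)) :=
  { D.kerToPi with
    invFun := fun y => ⟨⟨D.dnFam y, D.dnFam_mem y⟩, by
      rw [LinearMap.mem_ker]
      exact D.dnFam_S y⟩
    left_inv := by
      intro x
      apply Subtype.ext
      apply Subtype.ext
      funext T
      by_cases hT : D.Inact T
      · show D.dnFam _ T = x.1.1 T
        simp only [dnFam, dif_pos hT]
        rfl
      · show D.dnFam _ T = x.1.1 T
        simp only [dnFam, dif_neg hT]
        have hSv : x.1.1 D.Sv = 0 := x.2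
        exact (D.sigma_act_zero x.1.2 hSv T hT).symm
    right_inv := by
      intro y
      funext i
      apply Subtype.ext
      funext T
      show D.dnFam y (D.up i.1 T) = (y i).1 T
      have hi : D.Inact (D.up i.1 T) := D.up_inact i.1 i.2.1 T
      simp only [dnFam, dif_pos hi]
      have hind : (⟨D.theI (D.up i.1 T) hi, D.theI_max (D.up i.1 T) hi⟩ :
          {T : ↥D.L // D.MaxP T}) = i :=
        Subtype.ext (D.theI_unique (D.up i.1 T) hi i.1 i.2 (D.up_sub i.1 T))
      rw [D.dn_congr' y hind (D.up i.1 T)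
        (Finset.mem_filter.mpr ⟨(D.up i.1 T).2, D.theI_sub (D.up i.1 T) hi⟩) T.2]
      rfl }


-- ### the joint map J and its surjectivity

def Jmap : (↥(D.M D.Sv) →ₗ[ℂ] (Vspace D.S ⧸ D.M D.Sv)) →ₗ[ℂ]
    ((i : {T : ↥D.L // D.MaxP T}) → (↥(D.M D.Sv) →ₗ[ℂ] (Vspace i.1.1 ⧸ D.M i.1))) :=
  LinearMap.pi (fun i => D.cmap i.1)

lemma ker_Jmap : LinearMap.ker D.Jmap = D.Kp := by
  rw [Jmap, LinearMap.ker_pi]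
  apply le_antisymm
  · intro β hβ
    rw [Submodule.mem_iInf] at hβ
    rw [mem_Kp]
    intro T hT
    have h1 := hβ ⟨D.theI T hT, D.theI_max T hT⟩
    rw [LinearMap.mem_ker, cmap_apply] at h1
    refine LinearMap.ext fun m => ?_
    have h2 := LinearMap.congr_fun h1 m
    simp only [LinearMap.comp_apply] at h2 ⊢
    have h3 : D.qS T (β m) = qmp D.M D.hM T (D.theI T hT) (D.theI_sub T hT)
        (D.qS (D.theI T hT) (β m)) := by
      rw [qS, qS, qmp_comp_apply]
    rw [h3, h2]
    simp
  · intro β hβ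
    rw [Submodule.mem_iInf]
    intro i
    rw [LinearMap.mem_ker, cmap_apply]
    exact (D.mem_Kp.mp hβ) i.1 i.2.1

lemma qjoint_surj :
    Function.Surjective (LinearMap.pi
      (fun i : {T : ↥D.L // D.MaxP T} => D.qS i.1)) := by
  intro z
  have hz : ∀ i : {T : ↥D.L // D.MaxP T}, ∃ g : ↥(i.1.1) → ℂ,
      (Submodule.Quotient.mk (Submodule.Quotient.mk g : Vspace i.1.1)
        : Vspace i.1.1 ⧸ D.M i.1) = z i := by
    intro i
    obtain ⟨v, hv⟩ := Submodule.Quotient.mk_surjective _ (z i)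
    obtain ⟨g, hg⟩ := Submodule.Quotient.mk_surjective _ v
    exact ⟨g, by rw [hg, hv]⟩
  choose g hg using hz
  refine ⟨Submodule.Quotient.mk (Submodule.Quotient.mk
    (fun s => ∑ i : {T : ↥D.L // D.MaxP T},
      if h : s.1 ∈ i.1.1 then g i ⟨s.1, h⟩ else 0) : Vspace D.S), ?_⟩
  funext i
  simp only [LinearMap.pi_apply]
  rw [qS, qmp, Submodule.mapQ_apply, piUT_mk]
  have hrestr : restr i.1.1 (D.Sv).1 (D.hsub i.1)
      (fun s => ∑ j : {T : ↥D.L // D.MaxP T},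
        if h : s.1 ∈ j.1.1 then g j ⟨s.1, h⟩ else 0) = g i := by
    funext t
    show (∑ j : {T : ↥D.L // D.MaxP T},
      if h : t.1 ∈ j.1.1 then g j ⟨t.1, h⟩ else 0) = g i t
    rw [Fintype.sum_eq_single i]
    · rw [dif_pos t.2]
    · intro j hj
      rw [dif_neg]
      intro hmem
      apply hj
      apply Subtype.ext
      exact D.max_eq j.2 i.2 ⟨t.1, Finset.mem_inter.mpr ⟨hmem, t.2⟩⟩
  exact (congrArg (fun (u : ↥(i.1.1) → ℂ) =>
    (Submodule.Quotient.mk (Submodule.Quotient.mk u : Vspace i.1.1)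
      : Vspace i.1.1 ⧸ D.M i.1)) hrestr).trans (hg i)

lemma Jmap_surj : Function.Surjective D.Jmap := by
  intro γ
  obtain ⟨β, hβ⟩ := Module.projective_lifting_property
    (LinearMap.pi (fun i : {T : ↥D.L // D.MaxP T} => D.qS i.1))
    (LinearMap.pi (fun i : {T : ↥D.L // D.MaxP T} => γ i)) D.qjoint_surj
  refine ⟨β, ?_⟩
  funext i
  show D.cmap i.1 β = γ i
  rw [cmap_apply]
  refine LinearMap.ext fun m => ?_
  have h1 := LinearMap.congr_fun hβ m
  have h2 := congrFun (congrArg (fun v => (v : (j : {T : ↥D.L // D.MaxP T}) →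
      (Vspace j.1.1 ⧸ D.M j.1))) h1) i
  simpa using h2

end Setup

theorem auxmain : ∀ (n : ℕ) (D : Setup α), D.S.card ≤ n →
    Module.finrank ℂ ↥(sigmaSub D.L D.M D.hM) = D.S.card - 2 := by
  intro n
  induction n with
  | zero =>
    intro D h
    have := D.card_two D.Sv
    have hcard : (D.Sv).1.card = D.S.card := rfl
    omega
  | succ n ih =>
    intro D hn
    haveI : DecidablePred D.MaxP := Classical.decPred _
    haveI : Fintype {T : ↥D.L // D.MaxP T} := Subtype.fintype _
    haveI : FiniteDimensional ℂ
        ((T : ↥D.L) → (↥(D.M T) →ₗ[ℂ] (Vspace T.1 ⧸ D.M T))) := by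
      infer_instance
    have hrn := LinearMap.finrank_range_add_finrank_ker D.evf
    have hkerEq : Module.finrank ℂ ↥(LinearMap.ker D.evf)
        = ∑ i : {T : ↥D.L // D.MaxP T}, (i.1.1.card - 2) := by
      rw [D.kerEquiv.finrank_eq, Module.finrank_pi_fintype]
      refine Finset.sum_congr rfl fun i _ => ?_
      have hlt : i.1.1.card < D.S.card := by
        refine Finset.card_lt_card (Finset.ssubset_iff_subset_ne.mpr ⟨D.hsub i.1, ?_⟩)
        intro he
        exact D.not_inact_S (by
          have : i.1 = D.Sv := Subtype.ext he
          exact this ▸ i.2.1)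
      have hsc : (D.sub i.1).S.card = i.1.1.card := rfl
      exact ih (D.sub i.1) (by omega)
    have hrange : Module.finrank ℂ ↥(LinearMap.range D.evf)
        = Module.finrank ℂ ↥D.Kp := by rw [D.range_evf]
    have hJ := LinearMap.finrank_range_add_finrank_ker
      (V₂ := (i : {T : ↥D.L // D.MaxP T}) → (↥(D.M D.Sv) →ₗ[ℂ] (Vspace i.1.1 ⧸ D.M i.1))) D.Jmap
    rw [LinearMap.range_eq_top.mpr D.Jmap_surj, finrank_top, D.ker_Jmap] at hJ
    have hHom : ∀ (T : ↥D.L),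
        Module.finrank ℂ (↥(D.M D.Sv) →ₗ[ℂ] (Vspace T.1 ⧸ D.M T)) = T.1.card - 2 := by
      intro T
      rw [Module.finrank_linearMap, D.hdim D.Sv, one_mul]
      have h1 : Module.finrank ℂ (Vspace T.1 ⧸ D.M T) + Module.finrank ℂ ↥(D.M T)
          = Module.finrank ℂ (Vspace T.1) := Submodule.finrank_quotient_add_finrank _
      rw [D.hdim T, finrank_Vspace T.1 (D.nonempty_T T)] at h1
      have := D.card_two T
      omega
    have hHomS : Module.finrank ℂ (↥(D.M D.Sv) →ₗ[ℂ] (Vspace D.S ⧸ D.M D.Sv))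
        = D.S.card - 2 := hHom D.Sv
    have hcod : Module.finrank ℂ ((i : {T : ↥D.L // D.MaxP T}) →
        (↥(D.M D.Sv) →ₗ[ℂ] (Vspace i.1.1 ⧸ D.M i.1)))
        = ∑ i : {T : ↥D.L // D.MaxP T}, (i.1.1.card - 2) := by
      rw [Module.finrank_pi_fintype]
      exact Finset.sum_congr rfl fun i _ => hHom i.1
    rw [hcod, hHomS] at hJ
    rw [hrange, hkerEq] at hrn
    have h2 := D.card_two D.Sv
    have hcard : (D.Sv).1.card = D.S.card := rfl
    omega

end PortInst

/-- Lemma 6.3.4: for a thicket `L` on `S` and `M ∈ 𝓜̄_L`,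
`dim_ℂ σ_{L,M} = |S| − 2`. -/
theorem stmt10 (S : Finset α) (L : Finset (Finset α)) (hL : IsThicket S L)
    (M : (T : ↥L) → Submodule ℂ (Vspace T.1))
    (hdim : ∀ T, Module.finrank ℂ ↥(M T) = 1)
    (hM : ∀ (U T : ↥L) (h : U.1 ⊆ T.1),
      M T ≤ Submodule.comap (piUT U.1 T.1 h) (M U)) :
    Module.finrank ℂ ↥(sigmaSub L M hM) = S.card - 2 :=
  auxmain S.card ⟨S, L, hL, M, hdim, hM⟩ le_rfl

end
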